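/- Let X be a commutative group, Φ: X → X a map of the form Φ(γ) = Φ₀(γ) + y where Φ₀ is a group endomorphism satisfying a monic integral equation Φ₀^ℓ + c_{ℓ-1}Φ₀^{ℓ-1} + ... + c_0·Id = 0 in End(X), and y, α ∈ X. Then there exist integer linear recurrence sequences {u_n^{(i)}}_{1≤i≤ℓ} and {v_n^{(i)}}_{0≤i≤ℓ-1}, whose characteristic roots are among the roots of x^ℓ + c_{ℓ-1}x^{ℓ-1} + ... + c_0 (together with 1 for the u^{(i)}), such that for all n ∈ ℕ₀: Φ^n(α) = ∑_{i=1}^ℓ u_n^{(i)} (∑_{j=0}^{i-1} Φ₀^j(y)) + ∑_{i=0}^{ℓ-1} v_n^{(i)} Φ₀^i(α). -/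

import Mathlib

private def vs (ℓ : ℕ) (c : Fin ℓ → ℤ) (i : Fin ℓ) : ℕ → ℤ := fun n =>
  if h : n < ℓ then (if n = (i : ℕ) then 1 else 0)
  else -∑ j : Fin ℓ, c j * vs ℓ c i (n - ℓ + (j : ℕ))
termination_by n => n
decreasing_by
  have := j.isLt; omega

private lemma vs_lt {ℓ : ℕ} (c : Fin ℓ → ℤ) (i : Fin ℓ) {n : ℕ} (h : n < ℓ) :
    vs ℓ c i n = if n = (i : ℕ) then 1 else 0 := by
  rw [vs, dif_pos h]

private lemma vs_ge {ℓ : ℕ} (c : Fin ℓ → ℤ) (i : Fin ℓ) {n : ℕ} (h : ¬ n < ℓ) :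
    vs ℓ c i n = -∑ j : Fin ℓ, c j * vs ℓ c i (n - ℓ + (j : ℕ)) := by
  conv_lhs => rw [vs]
  rw [dif_neg h]

private lemma vs_rec {ℓ : ℕ} (c : Fin ℓ → ℤ) (i : Fin ℓ) (n : ℕ) :
    vs ℓ c i (n + ℓ) + ∑ j : Fin ℓ, c j * vs ℓ c i (n + (j : ℕ)) = 0 := by
  have h : ¬ n + ℓ < ℓ := by omega
  rw [vs_ge c i h]
  have : ∀ j : Fin ℓ, n + ℓ - ℓ + (j : ℕ) = n + (j : ℕ) := fun j => by omega
  simp only [this]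
  exact neg_add_cancel _

private lemma vs_pow {X : Type*} [AddCommGroup X] (Φ₀ : AddMonoid.End X) (ℓ : ℕ)
    (c : Fin ℓ → ℤ)
    (hmin : Φ₀ ^ ℓ + ∑ i : Fin ℓ, c i • Φ₀ ^ (i : ℕ) = 0) (n : ℕ) :
    (Φ₀ ^ n : AddMonoid.End X) = ∑ i : Fin ℓ, vs ℓ c i n • Φ₀ ^ (i : ℕ) := by
  induction n using Nat.strong_induction_on with
  | _ n ih =>
    by_cases h : n < ℓ
    · rw [Finset.sum_congr rfl (fun i _ => by rw [vs_lt c i h])]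
      rw [Finset.sum_eq_single (⟨n, h⟩ : Fin ℓ)]
      · simp
      · intro b _ hb
        have : n ≠ (b : ℕ) := fun hn => hb (Fin.ext hn.symm)
        simp [this]
      · simp
    · have hℓn : ℓ ≤ n := not_lt.mp h
      have hn : n = (n - ℓ) + ℓ := by omega
      set m := n - ℓ with hm
      have hpow : (Φ₀ ^ ℓ : AddMonoid.End X) = -∑ i : Fin ℓ, c i • Φ₀ ^ (i : ℕ) :=
        eq_neg_of_add_eq_zero_left hmin
      calc Φ₀ ^ n = Φ₀ ^ m * Φ₀ ^ ℓ := by rw [← pow_add, ← hn]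
        _ = -∑ j : Fin ℓ, c j • (Φ₀ ^ (m + (j : ℕ))) := by
            rw [hpow, mul_neg, Finset.mul_sum]
            congr 1
            refine Finset.sum_congr rfl fun j _ => ?_
            rw [mul_smul_comm, pow_add]
        _ = -∑ j : Fin ℓ, c j • ∑ i : Fin ℓ, vs ℓ c i (m + (j : ℕ)) • Φ₀ ^ (i : ℕ) := by
            congr 1
            exact Finset.sum_congr rfl fun j _ => by rw [ih (m + (j : ℕ)) (by have := j.isLt; omega)]
        _ = ∑ i : Fin ℓ, vs ℓ c i n • Φ₀ ^ (i : ℕ) := by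
            have hv : ∀ i : Fin ℓ, vs ℓ c i n = -∑ j : Fin ℓ, c j * vs ℓ c i (m + (j : ℕ)) :=
              fun i => vs_ge c i h
            have hs : ∀ j : Fin ℓ, c j • ∑ i : Fin ℓ, vs ℓ c i (m + (j : ℕ)) • Φ₀ ^ (i : ℕ)
                = ∑ i : Fin ℓ, c j • (vs ℓ c i (m + (j : ℕ)) • Φ₀ ^ (i : ℕ)) :=
              fun j => map_sum (zsmulAddGroupHom (c j)) _ _
            simp only [hv, neg_smul, Finset.sum_smul, Finset.smul_sum, hs, smul_smul,
              ← Finset.sum_neg_distrib]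
            rw [Finset.sum_comm]

private lemma abel_sum {X : Type*} [AddCommGroup X] (V : ℕ → ℤ) (A : ℕ → X) (m : ℕ) :
    ∑ i ∈ Finset.range m, V i • (A (i+1) - A i)
      = ∑ i ∈ Finset.range m, (V i - V (i+1)) • A (i+1) + V m • A m - V 0 • A 0 := by
  induction m with
  | zero => simp
  | succ m ih =>
    rw [Finset.sum_range_succ, Finset.sum_range_succ, ih]
    rw [smul_sub, sub_smul]
    abel

private lemma end_sum_apply {ι : Type*} {X : Type*} [AddCommGroup X] (s : Finset ι)
    (f : ι → AddMonoid.End X) (x : X) :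
    (∑ i ∈ s, f i) x = ∑ i ∈ s, f i x := by
  induction s using Finset.cons_induction with
  | empty => rfl
  | cons a s ha ih => rw [Finset.sum_cons, Finset.sum_cons, ← ih]; rfl

theorem stmt17 (X : Type*) [AddCommGroup X]
    (Φ₀ : AddMonoid.End X) (ℓ : ℕ) (hℓ : 1 ≤ ℓ) (c : Fin ℓ → ℤ)
    (hmin : Φ₀ ^ ℓ + ∑ i : Fin ℓ, c i • Φ₀ ^ (i : ℕ) = 0)
    (y α : X) (Φ : X → X) (hΦ : ∀ γ : X, Φ γ = Φ₀ γ + y) :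
    ∃ u v : Fin ℓ → ℕ → ℤ,
      -- each v⁽ⁱ⁾ satisfies the recurrence with characteristic polynomial
      -- x^ℓ + c_{ℓ-1} x^{ℓ-1} + ⋯ + c₀
      (∀ (i : Fin ℓ) (n : ℕ),
        v i (n + ℓ) + ∑ j : Fin ℓ, c j * v i (n + j) = 0) ∧
      -- each u⁽ⁱ⁾ satisfies the recurrence with characteristic polynomial
      -- (x - 1)·(x^ℓ + c_{ℓ-1} x^{ℓ-1} + ⋯ + c₀), i.e. its difference
      -- sequence satisfies the recurrence of Φ₀ (roots among those of the
      -- minimal equation together with 1)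
      (∀ (i : Fin ℓ) (n : ℕ),
        (u i (n + 1 + ℓ) - u i (n + ℓ)) +
          ∑ j : Fin ℓ, c j * (u i (n + 1 + j) - u i (n + j)) = 0) ∧
      (∀ n : ℕ,
        Φ^[n] α =
          ∑ i : Fin ℓ, u i n • (∑ j ∈ Finset.range ((i : ℕ) + 1), (Φ₀ ^ j) y)
            + ∑ i : Fin ℓ, v i n • (Φ₀ ^ (i : ℕ)) α) := by
  classical
  set W : Fin ℓ → ℕ → ℤ := fun i n =>
    vs ℓ c i n - (if h : (i : ℕ) + 1 < ℓ then vs ℓ c ⟨(i : ℕ) + 1, h⟩ n else 0) with hW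
  refine ⟨fun i n => ∑ k ∈ Finset.range n, W i k, vs ℓ c, ?_, ?_, ?_⟩
  · intro i n
    exact vs_rec c i n
  · intro i n
    have hδ : ∀ k, (∑ t ∈ Finset.range (k + 1), W i t) - ∑ t ∈ Finset.range k, W i t
        = W i k := fun k => by rw [Finset.sum_range_succ]; ring
    have e1 : ∀ j : Fin ℓ, n + 1 + (j : ℕ) = (n + (j : ℕ)) + 1 := fun j => by omega
    have e2 : n + 1 + ℓ = (n + ℓ) + 1 := by omega
    rw [e2, hδ]
    rw [Finset.sum_congr rfl (fun j _ => by rw [e1 j, hδ])]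
    by_cases hi : (i : ℕ) + 1 < ℓ
    · have h1 := vs_rec c i n
      have h2 := vs_rec c ⟨(i : ℕ) + 1, hi⟩ n
      simp only [hW, dif_pos hi, mul_sub]
      rw [Finset.sum_sub_distrib]
      linarith
    · simp only [hW, dif_neg hi, sub_zero]
      exact vs_rec c i n
  · -- evaluation of the power identity
    have hval : ∀ (m : ℕ) (x : X), (Φ₀ ^ m) x = ∑ i : Fin ℓ, vs ℓ c i m • (Φ₀ ^ (i : ℕ)) x := by
      intro m x
      rw [vs_pow Φ₀ ℓ c hmin m, end_sum_apply]
      exact Finset.sum_congr rfl fun i _ => rfl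
    -- iterate formula
    have hiter : ∀ m : ℕ, Φ^[m] α = (Φ₀ ^ m) α + ∑ k ∈ Finset.range m, (Φ₀ ^ k) y := by
      intro m
      induction m with
      | zero => simp
      | succ m ih =>
        have h1 : ∀ (k : ℕ) (x : X), Φ₀ ((Φ₀ ^ k) x) = (Φ₀ ^ (k + 1)) x := fun k x => by
          rw [pow_succ']; rfl
        rw [Function.iterate_succ_apply', ih, hΦ, map_add, map_sum, Finset.sum_range_succ',
          Finset.sum_congr rfl (fun k _ => h1 k y), h1 m α]
        have h0 : (Φ₀ ^ 0) y = y := rfl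
        rw [h0, add_assoc]
    -- partial-sum identity
    have hS : ∀ n : ℕ, ∑ k ∈ Finset.range n, (Φ₀ ^ k) y
        = ∑ i : Fin ℓ, (∑ k ∈ Finset.range n, W i k) •
            (∑ j ∈ Finset.range ((i : ℕ) + 1), (Φ₀ ^ j) y) := by
      intro n
      induction n with
      | zero => simp
      | succ n ih =>
        set V : ℕ → ℤ := fun k => if h : k < ℓ then vs ℓ c ⟨k, h⟩ n else 0 with hV
        set A : ℕ → X := fun k => ∑ j ∈ Finset.range k, (Φ₀ ^ j) y with hA
        have hVi : ∀ i : Fin ℓ, V (i : ℕ) = vs ℓ c i n := fun i => by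
          simp only [hV, dif_pos i.isLt]
        have hWi : ∀ i : Fin ℓ, V (i : ℕ) - V ((i : ℕ) + 1) = W i n := fun i => by
          rw [hVi i]
        have key : (Φ₀ ^ n) y
            = ∑ i : Fin ℓ, W i n • (∑ j ∈ Finset.range ((i : ℕ) + 1), (Φ₀ ^ j) y) := by
          have hAd : ∀ k, A (k + 1) - A k = (Φ₀ ^ k) y := fun k => by
            simp only [hA, Finset.sum_range_succ]; abel
          have habel := abel_sum V A ℓ
          simp only [hAd] at habel
          have hVℓ : V ℓ = 0 := dif_neg (lt_irrefl ℓ)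
          have hA0 : A 0 = 0 := rfl
          rw [hVℓ, hA0] at habel
          simp only [zero_smul, smul_zero, add_zero, sub_zero] at habel
          calc (Φ₀ ^ n) y = ∑ i : Fin ℓ, vs ℓ c i n • (Φ₀ ^ (i : ℕ)) y := hval n y
            _ = ∑ k ∈ Finset.range ℓ, V k • (Φ₀ ^ k) y := by
                rw [← Fin.sum_univ_eq_sum_range (fun k => V k • (Φ₀ ^ k) y) ℓ]
                exact Finset.sum_congr rfl fun i _ => by rw [hVi i]
            _ = ∑ k ∈ Finset.range ℓ, (V k - V (k + 1)) • A (k + 1) := habel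
            _ = ∑ i : Fin ℓ, W i n • A ((i : ℕ) + 1) := by
                rw [← Fin.sum_univ_eq_sum_range (fun k => (V k - V (k + 1)) • A (k + 1)) ℓ]
                exact Finset.sum_congr rfl fun i _ => by rw [hWi i]
            _ = ∑ i : Fin ℓ, W i n • (∑ j ∈ Finset.range ((i : ℕ) + 1), (Φ₀ ^ j) y) := rfl
        rw [Finset.sum_range_succ, ih, key, ← Finset.sum_add_distrib]
        exact Finset.sum_congr rfl fun i _ => by
          rw [show (∑ k ∈ Finset.range (n + 1), W i k)
              = (∑ k ∈ Finset.range n, W i k) + W i n from Finset.sum_range_succ _ n, add_smul]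
    intro n
    rw [hiter n, hval n α, hS n]
    exact add_comm _ _
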